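/- Let A, B be algebras in a variety, let (e⃗, f⃗) be a complementary pair of central elements of A witnessed by congruences θ = Cg^A(0⃗,e⃗) and θ* = Cg^A(0⃗,f⃗), and let g : A → B be a homomorphism such that (g(e⃗), g(f⃗)) is a complementary pair of central elements of B witnessed by Cg^B(0⃗,g(e⃗)) and Cg^B(0⃗,g(f⃗)). Then the two pushout squares of the quotient maps A → A/θ and A → A/θ* along g exhibit B as the product of the two pushout objects: B ≅ B/Cg^B(0⃗,g(e⃗)) × B/Cg^B(0⃗,g(f⃗)), and the pushout objects are isomorphic to these quotients. -/

import Mathlib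

/-- A similarity type (signature) of algebras. -/
structure Sgn where
  ops : Type
  arity : ops → ℕ

/-- An algebra of signature `σ` on carrier `A`. -/
class MAlg (σ : Sgn) (A : Type) where
  app : ∀ o : σ.ops, (Fin (σ.arity o) → A) → A

/-- Homomorphisms of `σ`-algebras. -/
structure MHom (σ : Sgn) (A B : Type) [MAlg σ A] [MAlg σ B] where
  toFun : A → B
  map_app : ∀ (o : σ.ops) (x : Fin (σ.arity o) → A),
    toFun (MAlg.app o x) = MAlg.app o (fun i => toFun (x i))

/-- `r` is a congruence of the `σ`-algebra `A`. -/
def IsCong (σ : Sgn) (A : Type) [MAlg σ A] (r : A → A → Prop) : Prop :=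
  Equivalence r ∧ ∀ (o : σ.ops) (x y : Fin (σ.arity o) → A),
    (∀ i, r (x i) (y i)) → r (MAlg.app o x) (MAlg.app o y)

/-- The congruence of `A` generated by a set `S` of pairs. -/
def cgen (σ : Sgn) (A : Type) [MAlg σ A] (S : Set (A × A)) : A → A → Prop :=
  fun a b => ∀ r : A → A → Prop, IsCong σ A r → (∀ p ∈ S, r p.1 p.2) → r a b

/-- The congruence generated by the pairs `(a i, b i)`. -/
abbrev cgenP (σ : Sgn) (A : Type) [MAlg σ A] {k : ℕ} (a b : Fin k → A) : A → A → Prop :=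
  cgen σ A {p | ∃ i, p = (a i, b i)}

theorem cgen_isCong (σ : Sgn) (A : Type) [MAlg σ A] (S : Set (A × A)) :
    IsCong σ A (cgen σ A S) := by
  constructor
  · constructor
    · intro a r hr _; exact hr.1.refl a
    · intro a b h r hr hS; exact hr.1.symm (h r hr hS)
    · intro a b c h1 h2 r hr hS; exact hr.1.trans (h1 r hr hS) (h2 r hr hS)
  · intro o x y h r hr hS
    exact hr.2 o x y (fun i => h i r hr hS)

/-- The setoid attached to a congruence. -/
def conStd {σ : Sgn} {A : Type} [MAlg σ A] (r : A → A → Prop) (h : IsCong σ A r) :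
    Setoid A := ⟨r, h.1⟩

/-- The quotient of an algebra by a congruence. -/
abbrev QuotC {σ : Sgn} {A : Type} [MAlg σ A] (r : A → A → Prop) (h : IsCong σ A r) : Type :=
  Quotient (conStd r h)

noncomputable instance {σ : Sgn} {A : Type} [MAlg σ A] {r : A → A → Prop} {h : IsCong σ A r} :
    MAlg σ (QuotC r h) :=
  ⟨fun o x => Quotient.mk (conStd r h) (MAlg.app o (fun i => (x i).out))⟩

/-- The canonical quotient homomorphism. -/
noncomputable def qmap {σ : Sgn} {A : Type} [MAlg σ A] (r : A → A → Prop) (h : IsCong σ A r) :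
    MHom σ A (QuotC r h) where
  toFun a := Quotient.mk (conStd r h) a
  map_app o x := by
    apply Quotient.sound
    exact h.2 o x (fun i => (Quotient.mk (conStd r h) (x i)).out)
      (fun i => (conStd r h).symm (Quotient.mk_out (s := conStd r h) (x i)))

/-- The product algebra. -/
instance {σ : Sgn} {A B : Type} [MAlg σ A] [MAlg σ B] : MAlg σ (A × B) :=
  ⟨fun o x => (MAlg.app o (fun i => (x i).1), MAlg.app o (fun i => (x i).2))⟩

/-- Composition of homomorphisms. -/
def MHom.comp {σ : Sgn} {A B C : Type} [MAlg σ A] [MAlg σ B] [MAlg σ C]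
    (g : MHom σ B C) (f : MHom σ A B) : MHom σ A C where
  toFun := g.toFun ∘ f.toFun
  map_app o x := by simp [Function.comp, f.map_app, g.map_app]

lemma cgenP_gen {σ : Sgn} {A : Type} [MAlg σ A] {k : ℕ} (a b : Fin k → A) (i : Fin k) :
    cgenP σ A a b (a i) (b i) := by
  intro r _ hS
  exact hS (a i, b i) ⟨i, rfl⟩

lemma push_lemma (σ : Sgn) (A B : Type) [MAlg σ A] [MAlg σ B] (g : MHom σ A B)
    {k : ℕ} (a b : Fin k → A) (a' b' : Fin k → B)
    (ha : ∀ i, a' i = g.toFun (a i)) (hb : ∀ i, b' i = g.toFun (b i)) :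
    ∀ ψ : MHom σ (QuotC (cgenP σ A a b) (cgen_isCong σ A _))
        (QuotC (cgenP σ B a' b') (cgen_isCong σ B _)),
      (∀ x : A, ψ.toFun ((qmap (cgenP σ A a b) (cgen_isCong σ A _)).toFun x) =
        (qmap (cgenP σ B a' b') (cgen_isCong σ B _)).toFun (g.toFun x)) →
      ∀ (D : Type) (iD : MAlg σ D)
        (u : @MHom σ (QuotC (cgenP σ A a b) (cgen_isCong σ A _)) D _ iD)
        (v : @MHom σ B D _ iD),
        (∀ x : A, u.toFun ((qmap (cgenP σ A a b) (cgen_isCong σ A _)).toFun x) =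
            v.toFun (g.toFun x)) →
        ∃! w : @MHom σ (QuotC (cgenP σ B a' b') (cgen_isCong σ B _)) D _ iD,
          (∀ q, w.toFun (ψ.toFun q) = u.toFun q) ∧
          (∀ x : B, w.toFun ((qmap (cgenP σ B a' b') (cgen_isCong σ B _)).toFun x)
            = v.toFun x) := by
  intro ψ hψ D iD u v huv
  -- the kernel of v is a congruence
  have hker : IsCong σ B (fun x y => v.toFun x = v.toFun y) := by
    refine ⟨⟨fun _ => rfl, fun h => h.symm, fun h1 h2 => h1.trans h2⟩, ?_⟩
    intro o x y h
    rw [v.map_app, v.map_app]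
    exact congrArg _ (funext h)
  have hgens : ∀ p ∈ {p : B × B | ∃ i, p = (a' i, b' i)},
      v.toFun p.1 = v.toFun p.2 := by
    rintro p ⟨i, rfl⟩
    have h1 : (qmap (cgenP σ A a b) (cgen_isCong σ A _)).toFun (a i)
        = (qmap (cgenP σ A a b) (cgen_isCong σ A _)).toFun (b i) :=
      Quotient.sound (cgenP_gen a b i)
    have := (huv (a i)).symm.trans ((congrArg u.toFun h1).trans (huv (b i)))
    simpa [ha i, hb i] using this
  have hresp : ∀ x y : B, cgenP σ B a' b' x y → v.toFun x = v.toFun y :=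
    fun x y h => h _ hker hgens
  refine ⟨⟨Quotient.lift v.toFun (fun x y h => hresp x y h), ?_⟩, ⟨?_, ?_⟩, ?_⟩
  · intro o x
    show Quotient.lift v.toFun _
        (Quotient.mk (conStd (cgenP σ B a' b') (cgen_isCong σ B _))
          (MAlg.app o fun i => (x i).out)) = _
    rw [Quotient.lift_mk, v.map_app]
    congr 1
    funext i
    conv_rhs => rw [← Quotient.out_eq (x i)]
    rfl
  · intro q
    induction q using Quotient.ind with
    | _ x =>
      exact (congrArg (Quotient.lift v.toFun (fun x y h => hresp x y h))
        (hψ x)).trans (huv x).symm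
  · intro x; rfl
  · rintro w ⟨-, hw2⟩
    have : w.toFun = Quotient.lift v.toFun (fun x y h => hresp x y h) := by
      funext q
      induction q using Quotient.ind with
      | _ x => exact hw2 x
    cases w; simpa using this

/-- if `(e⃗,f⃗)` is a complementary pair of central elements of `A` witnessed
by the complementary factor congruences `Cg(0⃗,e⃗)`, `Cg(0⃗,f⃗)`, and `g : A → B` is a
homomorphism such that `(g e⃗, g f⃗)` is likewise witnessed in `B`, then the two pushout
squares of the quotient maps along `g` exhibit `B` as the product of the two pushout
objects: the pushout of `A → A/Cg(0⃗,e⃗)` along `g` is `B → B/Cg(0⃗,g e⃗)` (and similarly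
for `f⃗`), and the canonical map `B → B/Cg(0⃗,g e⃗) × B/Cg(0⃗,g f⃗)` is an isomorphism. -/
theorem stmt19 (σ : Sgn) (N : ℕ)
    (zero one : ∀ (A : Type) [MAlg σ A], Fin N → A)
    (hz : ∀ (A B : Type) [MAlg σ A] [MAlg σ B] (h : MHom σ A B) (i : Fin N),
      h.toFun (zero A i) = zero B i)
    (ho : ∀ (A B : Type) [MAlg σ A] [MAlg σ B] (h : MHom σ A B) (i : Fin N),
      h.toFun (one A i) = one B i)
    (A B : Type) [MAlg σ A] [MAlg σ B] (g : MHom σ A B) (e f : Fin N → A)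
    -- `Cg(0⃗,e⃗)` and `Cg(0⃗,f⃗)` are a complementary pair of factor congruences of `A`:
    (hA1 : ∀ x y : A, (cgenP σ A (zero A) e x y ∧ cgenP σ A (zero A) f x y) ↔ x = y)
    (hA2 : ∀ x y : A, ∃ c : A, cgenP σ A (zero A) e x c ∧ cgenP σ A (zero A) f c y)
    -- and likewise for the images in `B`:
    (hB1 : ∀ x y : B, (cgenP σ B (zero B) (fun k => g.toFun (e k)) x y ∧
        cgenP σ B (zero B) (fun k => g.toFun (f k)) x y) ↔ x = y)
    (hB2 : ∀ x y : B, ∃ c : B, cgenP σ B (zero B) (fun k => g.toFun (e k)) x c ∧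
        cgenP σ B (zero B) (fun k => g.toFun (f k)) c y) :
    -- the square over `e⃗` is a pushout:
    (∀ ψ : MHom σ (QuotC (cgenP σ A (zero A) e) (cgen_isCong σ A _))
        (QuotC (cgenP σ B (zero B) (fun k => g.toFun (e k))) (cgen_isCong σ B _)),
      (∀ a : A, ψ.toFun ((qmap (cgenP σ A (zero A) e) (cgen_isCong σ A _)).toFun a) =
        (qmap (cgenP σ B (zero B) (fun k => g.toFun (e k)))
          (cgen_isCong σ B _)).toFun (g.toFun a)) →
      ∀ (D : Type) (iD : MAlg σ D)
        (u : @MHom σ (QuotC (cgenP σ A (zero A) e) (cgen_isCong σ A _)) D _ iD)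
        (v : @MHom σ B D _ iD),
        (∀ a : A, u.toFun ((qmap (cgenP σ A (zero A) e) (cgen_isCong σ A _)).toFun a) =
            v.toFun (g.toFun a)) →
        ∃! w : @MHom σ (QuotC (cgenP σ B (zero B) (fun k => g.toFun (e k)))
            (cgen_isCong σ B _)) D _ iD,
          (∀ q, w.toFun (ψ.toFun q) = u.toFun q) ∧
          (∀ x : B, w.toFun ((qmap (cgenP σ B (zero B) (fun k => g.toFun (e k)))
              (cgen_isCong σ B _)).toFun x) = v.toFun x)) ∧
    -- the square over `f⃗` is a pushout:
    (∀ ψ : MHom σ (QuotC (cgenP σ A (zero A) f) (cgen_isCong σ A _))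
        (QuotC (cgenP σ B (zero B) (fun k => g.toFun (f k))) (cgen_isCong σ B _)),
      (∀ a : A, ψ.toFun ((qmap (cgenP σ A (zero A) f) (cgen_isCong σ A _)).toFun a) =
        (qmap (cgenP σ B (zero B) (fun k => g.toFun (f k)))
          (cgen_isCong σ B _)).toFun (g.toFun a)) →
      ∀ (D : Type) (iD : MAlg σ D)
        (u : @MHom σ (QuotC (cgenP σ A (zero A) f) (cgen_isCong σ A _)) D _ iD)
        (v : @MHom σ B D _ iD),
        (∀ a : A, u.toFun ((qmap (cgenP σ A (zero A) f) (cgen_isCong σ A _)).toFun a) =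
            v.toFun (g.toFun a)) →
        ∃! w : @MHom σ (QuotC (cgenP σ B (zero B) (fun k => g.toFun (f k)))
            (cgen_isCong σ B _)) D _ iD,
          (∀ q, w.toFun (ψ.toFun q) = u.toFun q) ∧
          (∀ x : B, w.toFun ((qmap (cgenP σ B (zero B) (fun k => g.toFun (f k)))
              (cgen_isCong σ B _)).toFun x) = v.toFun x)) ∧
    -- `B` is the product of the two quotients:
    Function.Bijective (fun x : B =>
      ((qmap (cgenP σ B (zero B) (fun k => g.toFun (e k))) (cgen_isCong σ B _)).toFun x,
       (qmap (cgenP σ B (zero B) (fun k => g.toFun (f k))) (cgen_isCong σ B _)).toFun x)) := by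
  refine ⟨?_, ?_, ?_⟩
  · exact push_lemma σ A B g (zero A) e (zero B) (fun k => g.toFun (e k))
      (fun i => (hz A B g i).symm) (fun i => rfl)
  · exact push_lemma σ A B g (zero A) f (zero B) (fun k => g.toFun (f k))
      (fun i => (hz A B g i).symm) (fun i => rfl)
  · constructor
    · intro x y h
      rw [Prod.ext_iff] at h
      exact (hB1 x y).mp ⟨Quotient.exact h.1, Quotient.exact h.2⟩
    · rintro ⟨p, q⟩
      induction p using Quotient.ind with
      | _ x =>
        induction q using Quotient.ind with
        | _ y =>
          obtain ⟨c, h1, h2⟩ := hB2 x y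
          exact ⟨c, Prod.ext (Quotient.sound ((cgen_isCong σ B _).1.symm h1))
            (Quotient.sound h2)⟩
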